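/- Let f : ℤ_p \ {0} → ℚ_p be f(x) = p^{-v(x)}. For any subset A ⊆ ℤ_p \ {0} on which the valuation v is unbounded above, the restriction of f to A is not Lipschitz continuous for any constant. Consequently, for every finite partition of ℤ_p \ {0}, there is a piece on which f is not Lipschitz continuous. -/

import Mathlib

/-- For `f(x) = p^{-v(x)}` on `ℤ_p \ {0}`: on any subset `A` on which the
valuation is unbounded above, `f` is not Lipschitz for any constant; consequently, for
every finite partition of `ℤ_p \ {0}` there is a piece on which `f` is not Lipschitz. -/
theorem stmt3 (p : ℕ) [Fact p.Prime] (f : ℤ_[p] → ℚ_[p])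
    (hf : ∀ x : ℤ_[p], x ≠ 0 → f x = (p : ℚ_[p]) ^ (-(x.valuation : ℤ))) :
    (∀ A : Set ℤ_[p], (∀ x ∈ A, x ≠ 0) → (∀ N : ℤ, ∃ x ∈ A, N < x.valuation) →
      ∀ C : ℝ, ∃ x ∈ A, ∃ y ∈ A, C * ‖x - y‖ < ‖f x - f y‖) ∧
    (∀ (n : ℕ) (P : Fin n → Set ℤ_[p]), (∀ i, ∀ x ∈ P i, x ≠ 0) →
      (∀ x : ℤ_[p], x ≠ 0 → ∃ i, x ∈ P i) →
      ∃ i, ∀ C : ℝ, ∃ x ∈ P i, ∃ y ∈ P i, C * ‖x - y‖ < ‖f x - f y‖) := by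
  have hp1 : (1 : ℝ) < (p : ℝ) := by exact_mod_cast (Fact.out : p.Prime).one_lt
  have hp0 : (0 : ℝ) < (p : ℝ) := lt_trans one_pos hp1
  -- norm of f
  have hnorm : ∀ x : ℤ_[p], x ≠ 0 → ‖f x‖ = (p : ℝ) ^ (x.valuation : ℤ) := by
    intro x hx
    rw [hf x hx, Padic.norm_p_zpow, neg_neg]
  have key : ∀ A : Set ℤ_[p], (∀ x ∈ A, x ≠ 0) → (∀ N : ℤ, ∃ x ∈ A, N < x.valuation) →
      ∀ C : ℝ, ∃ x ∈ A, ∃ y ∈ A, C * ‖x - y‖ < ‖f x - f y‖ := by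
    intro A h0 hub C
    obtain ⟨y, hyA, _⟩ := hub 0
    -- choose n with C < p ^ n
    obtain ⟨n, hn⟩ := pow_unbounded_of_one_lt C hp1
    obtain ⟨x, hxA, hxv⟩ := hub (max y.valuation n)
    have hvy : (y.valuation : ℤ) < x.valuation := lt_of_le_of_lt (le_max_left _ _) hxv
    have hvn : (n : ℤ) < x.valuation := lt_of_le_of_lt (le_max_right _ _) hxv
    refine ⟨x, hxA, y, hyA, ?_⟩
    have hnx := hnorm x (h0 x hxA)
    have hny := hnorm y (h0 y hyA)
    have hne : ‖f x‖ ≠ ‖-f y‖ := by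
      rw [norm_neg, hnx, hny]
      exact ne_of_gt (zpow_lt_zpow_right₀ hp1 hvy)
    have hmax : ‖f x - f y‖ = max ‖f x‖ ‖-f y‖ := by
      rw [sub_eq_add_neg]
      exact Padic.add_eq_max_of_ne hne
    have hfx : (p : ℝ) ^ (n : ℤ) < ‖f x - f y‖ := by
      rw [hmax]
      calc (p : ℝ) ^ (n : ℤ) < (p : ℝ) ^ (x.valuation : ℤ) := zpow_lt_zpow_right₀ hp1 hvn
        _ = ‖f x‖ := hnx.symm
        _ ≤ max ‖f x‖ ‖-f y‖ := le_max_left _ _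
    have hCn : C < (p : ℝ) ^ (n : ℤ) := by
      calc C < (p : ℝ) ^ n := hn
        _ = (p : ℝ) ^ (n : ℤ) := (zpow_natCast _ _).symm
    have hle1 : ‖x - y‖ ≤ 1 := PadicInt.norm_le_one _
    have hCC : C * ‖x - y‖ ≤ (p : ℝ) ^ (n : ℤ) := by
      rcases le_or_gt C 0 with hC | hC
      · calc C * ‖x - y‖ ≤ 0 := mul_nonpos_of_nonpos_of_nonneg hC (norm_nonneg _)
          _ ≤ (p : ℝ) ^ (n : ℤ) := le_of_lt (zpow_pos hp0 _)
      · calc C * ‖x - y‖ ≤ C * 1 := by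
              exact mul_le_mul_of_nonneg_left hle1 (le_of_lt hC)
          _ = C := mul_one C
          _ ≤ (p : ℝ) ^ (n : ℤ) := le_of_lt hCn
    exact lt_of_le_of_lt hCC hfx
  refine ⟨key, ?_⟩
  intro n P hP hcover
  by_contra hcon
  push_neg at hcon
  -- each piece has bounded valuation
  have hbdd : ∀ i : Fin n, ∃ N : ℤ, ∀ x ∈ P i, x.valuation ≤ N := by
    intro i
    by_contra hb
    push_neg at hb
    obtain ⟨C, hC⟩ := hcon i
    obtain ⟨x, hx, y, hy, hxy⟩ := key (P i) (hP i) (fun N => by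
      obtain ⟨x, hx, hxN⟩ := hb N; exact ⟨x, hx, hxN⟩) C
    exact absurd hxy (not_lt.mpr (hC x hx y hy))
  choose N hN using hbdd
  set M : ℕ := (Finset.univ.sup fun i => (N i).toNat) + 1 with hM
  have hxne : ((p : ℤ_[p]) ^ M : ℤ_[p]) ≠ 0 := by
    apply pow_ne_zero
    exact_mod_cast (Fact.out : p.Prime).ne_zero
  obtain ⟨i, hi⟩ := hcover _ hxne
  have hval : ((p : ℤ_[p]) ^ M).valuation = M := by
    have := PadicInt.valuation_p_pow_mul (p := p) M 1 one_ne_zero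
    simpa using this
  have h1 : ((p : ℤ_[p]) ^ M).valuation ≤ N i := hN i _ hi
  have h2 : (N i).toNat ≤ Finset.univ.sup fun i => (N i).toNat :=
    Finset.le_sup (f := fun j => (N j).toNat) (Finset.mem_univ i)
  have h3 : N i ≤ ((Finset.univ.sup fun i => (N i).toNat : ℕ) : ℤ) :=
    le_trans (Int.self_le_toNat _) (by exact_mod_cast h2)
  rw [hval] at h1
  omega
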